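/- For every m > 0, the mean curvature along the arclength coordinate, h(s) := H_m(r_m(s)), satisfies: h is differentiable on (0, ∞) with h′(s) = 6m/r_m(s)³ − 2/r_m(s)² = (2/r_m(s)³)(3m − r_m(s)); the one-sided derivative of h at s = 0 exists and equals 3 + 1/r₀(m)², which is strictly positive; and h′(s) > 0 when r_m(s) < 3m while h′(s) < 0 when r_m(s) > 3m. -/

import Mathlib

open MeasureTheory Set Filter intervalIntegral
open scoped Topology


/-- The mean curvature `H_m(r) = (2/r)√(1 + r² − 2m/r)` of the coordinate sphere `S_r`
in the Schwarzschild anti-de Sitter space of mass `m`. -/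
noncomputable def Hm (m r : ℝ) : ℝ := (2 / r) * Real.sqrt (1 + r ^ 2 - 2 * m / r)

/-- The arclength function `s_m(r) = ∫_{r₀}^{r} (1 + t² − 2m/t)^{−1/2} dt`, the
`g_m`-distance from the coordinate sphere `S_r` to the boundary sphere `S_{r₀}` in the
Schwarzschild anti-de Sitter space of mass `m`. -/
noncomputable def sm (m r₀ r : ℝ) : ℝ :=
  ∫ t in Set.Ioc r₀ r, (Real.sqrt (1 + t ^ 2 - 2 * m / t))⁻¹


private theorem penrose14_fac (m r₀ : ℝ) (hroot : r₀ ^ 3 + r₀ = 2 * m) {t : ℝ} (ht : 0 < t) :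
    1 + t ^ 2 - 2 * m / t = (t - r₀) * (t ^ 2 + r₀ * t + r₀ ^ 2 + 1) / t := by
  field_simp
  linear_combination hroot

private theorem penrose14_fpos (m r₀ : ℝ) (hr₀ : 0 < r₀) (hroot : r₀ ^ 3 + r₀ = 2 * m) {t : ℝ} (ht : r₀ < t) :
    0 < 1 + t ^ 2 - 2 * m / t := by
  have h0 : (0:ℝ) < t := hr₀.trans ht
  rw [penrose14_fac m r₀ hroot h0]
  have h1 : 0 < t ^ 2 + r₀ * t + r₀ ^ 2 + 1 := by positivity
  exact div_pos (mul_pos (sub_pos.2 ht) h1) h0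

private theorem penrose14_f0 (m r₀ : ℝ) (hr₀ : 0 < r₀) (hroot : r₀ ^ 3 + r₀ = 2 * m) :
    1 + r₀ ^ 2 - 2 * m / r₀ = 0 := by
  rw [penrose14_fac m r₀ hroot hr₀]; simp

private theorem penrose14_g_meas (m : ℝ) : Measurable fun t : ℝ => (Real.sqrt (1 + t ^ 2 - 2 * m / t))⁻¹ := by
  fun_prop

private theorem penrose14_g_contOn (m r₀ : ℝ) (hr₀ : 0 < r₀) (hroot : r₀ ^ 3 + r₀ = 2 * m) :
    ContinuousOn (fun t : ℝ => (Real.sqrt (1 + t ^ 2 - 2 * m / t))⁻¹) (Set.Ioi r₀) := by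
  apply ContinuousOn.inv₀
  · apply ContinuousOn.sqrt
    exact (continuousOn_const.add (continuousOn_pow 2)).sub
      (continuousOn_const.div continuousOn_id (fun t ht => ne_of_gt (hr₀.trans ht)))
  · intro t ht
    exact ne_of_gt (Real.sqrt_pos.2 (penrose14_fpos m r₀ hr₀ hroot ht))

private theorem penrose14_g_intOn (m r₀ : ℝ) (hr₀ : 0 < r₀) (hroot : r₀ ^ 3 + r₀ = 2 * m) {R : ℝ} (hR : r₀ < R) :
    IntegrableOn (fun t : ℝ => (Real.sqrt (1 + t ^ 2 - 2 * m / t))⁻¹) (Set.Ioc r₀ R) := by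
  have hR0 : (0:ℝ) < R := hr₀.trans hR
  -- integrability of the comparison function
  have hb : IntegrableOn (fun t : ℝ => Real.sqrt R * (Real.sqrt (t - r₀))⁻¹) (Set.Ioc r₀ R) := by
    have h1 : IntervalIntegrable (fun x : ℝ => x ^ (-(1/2) : ℝ)) volume 0 (R - r₀) :=
      intervalIntegral.intervalIntegrable_rpow' (by norm_num)
    have h2 : IntervalIntegrable (fun x : ℝ => (x - r₀) ^ (-(1/2) : ℝ)) volume r₀ R := by
      have := h1.comp_sub_right r₀
      simpa using this
    have h3 : IntegrableOn (fun x : ℝ => (x - r₀) ^ (-(1/2) : ℝ)) (Set.Ioc r₀ R) :=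
      (intervalIntegrable_iff_integrableOn_Ioc_of_le hR.le).1 h2
    have h4 := h3.const_mul (Real.sqrt R)
    apply MeasureTheory.IntegrableOn.congr_fun h4 ?_ measurableSet_Ioc
    intro t ht
    have h0 : (0:ℝ) ≤ t - r₀ := by linarith [ht.1]
    simp only [Real.rpow_neg h0, ← Real.sqrt_eq_rpow]
  -- comparison
  apply MeasureTheory.Integrable.mono' hb ((penrose14_g_meas m).aestronglyMeasurable)
  filter_upwards [ae_restrict_mem measurableSet_Ioc] with t ht
  have ht1 : r₀ < t := ht.1
  have ht2 : t ≤ R := ht.2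
  have ht0 : (0:ℝ) < t := hr₀.trans ht1
  have hfpos : 0 < 1 + t ^ 2 - 2 * m / t := penrose14_fpos m r₀ hr₀ hroot ht1
  have hstep : (t - r₀) / R ≤ 1 + t ^ 2 - 2 * m / t := by
    rw [penrose14_fac m r₀ hroot ht0, div_le_div_iff₀ hR0 ht0]
    have e1 : (t - r₀) * t ≤ (t - r₀) * R := by nlinarith
    have e2 : (t - r₀) * R ≤ (t - r₀) * (t ^ 2 + r₀ * t + r₀ ^ 2 + 1) * R := by
      nlinarith [mul_nonneg (mul_nonneg (sub_nonneg.2 ht1.le) hR0.le)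
        (by positivity : (0:ℝ) ≤ t ^ 2 + r₀ * t + r₀ ^ 2)]
    linarith
  have hq : 0 < (t - r₀) / R := div_pos (by linarith) hR0
  rw [Real.norm_eq_abs, abs_of_nonneg (inv_nonneg.2 (Real.sqrt_nonneg _))]
  have hmono : Real.sqrt ((t - r₀) / R) ≤ Real.sqrt (1 + t ^ 2 - 2 * m / t) :=
    Real.sqrt_le_sqrt hstep
  have h5 : (Real.sqrt (1 + t ^ 2 - 2 * m / t))⁻¹ ≤ (Real.sqrt ((t - r₀) / R))⁻¹ :=
    inv_anti₀ (Real.sqrt_pos.2 hq) hmono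
  refine h5.trans (le_of_eq ?_)
  rw [Real.sqrt_div (by linarith : (0:ℝ) ≤ t - r₀), inv_div, div_eq_mul_inv]

private theorem penrose14_sm_eq (m r₀ : ℝ) {r : ℝ} (h : r₀ ≤ r) :
    sm m r₀ r = ∫ t in r₀..r, (Real.sqrt (1 + t ^ 2 - 2 * m / t))⁻¹ :=
  (intervalIntegral.integral_of_le h).symm

private theorem penrose14_sm_zero (m r₀ : ℝ) : sm m r₀ r₀ = 0 := by
  simp [sm]

private theorem penrose14_g_ii (m r₀ : ℝ) (hr₀ : 0 < r₀) (hroot : r₀ ^ 3 + r₀ = 2 * m) {a b : ℝ}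
    (ha : r₀ ≤ a) (hab : a ≤ b) :
    IntervalIntegrable (fun t : ℝ => (Real.sqrt (1 + t ^ 2 - 2 * m / t))⁻¹) volume a b := by
  rw [intervalIntegrable_iff_integrableOn_Ioc_of_le hab]
  rcases eq_or_lt_of_le (ha.trans hab) with h | h
  · rw [show Set.Ioc a b = ∅ by rw [Set.Ioc_eq_empty_iff]; intro hc; nlinarith]
    exact integrableOn_empty
  · exact (penrose14_g_intOn m r₀ hr₀ hroot h).mono_set (Set.Ioc_subset_Ioc ha le_rfl)

private theorem penrose14_sm_deriv (m r₀ : ℝ) (hr₀ : 0 < r₀) (hroot : r₀ ^ 3 + r₀ = 2 * m) {r : ℝ}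
    (hr : r₀ < r) :
    HasDerivAt (sm m r₀) ((Real.sqrt (1 + r ^ 2 - 2 * m / r))⁻¹) r := by
  set g : ℝ → ℝ := fun t => (Real.sqrt (1 + t ^ 2 - 2 * m / t))⁻¹ with hg
  set c : ℝ := (r₀ + r) / 2 with hc
  have hc1 : r₀ < c := by rw [hc]; linarith
  have hc2 : c < r := by rw [hc]; linarith
  have hii : IntervalIntegrable g volume c r := penrose14_g_ii m r₀ hr₀ hroot hc1.le hc2.le
  have hca : ContinuousAt g r :=
    (penrose14_g_contOn m r₀ hr₀ hroot).continuousAt (isOpen_Ioi.mem_nhds hr)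
  have hF : HasDerivAt (fun x => sm m r₀ c + ∫ t in c..x, g t) (g r) r :=
    (intervalIntegral.integral_hasDerivAt_right hii
      ((penrose14_g_meas m).stronglyMeasurable.stronglyMeasurableAtFilter) hca).const_add _
  apply hF.congr_of_eventuallyEq
  filter_upwards [isOpen_Ioi.mem_nhds hc2] with x (hx : c < x)
  have hx0 : r₀ ≤ x := (hc1.trans hx).le
  rw [penrose14_sm_eq m r₀ hx0, penrose14_sm_eq m r₀ hc1.le,
    ← intervalIntegral.integral_add_adjacent_intervals (penrose14_g_ii m r₀ hr₀ hroot le_rfl hc1.le)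
      (penrose14_g_ii m r₀ hr₀ hroot hc1.le hx.le)]

private theorem penrose14_sm_mono (m r₀ : ℝ) (hr₀ : 0 < r₀) (hroot : r₀ ^ 3 + r₀ = 2 * m) {a b : ℝ}
    (ha : r₀ ≤ a) (hab : a < b) : sm m r₀ a < sm m r₀ b := by
  have h1 := penrose14_g_ii m r₀ hr₀ hroot le_rfl ha
  have h2 := penrose14_g_ii m r₀ hr₀ hroot ha hab.le
  rw [penrose14_sm_eq m r₀ ha, penrose14_sm_eq m r₀ (ha.trans hab.le),
    ← intervalIntegral.integral_add_adjacent_intervals h1 h2]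
  have hpos : 0 < ∫ t in a..b, (Real.sqrt (1 + t ^ 2 - 2 * m / t))⁻¹ := by
    apply intervalIntegral.intervalIntegral_pos_of_pos_on h2 _ hab
    intro t ht
    exact inv_pos.2 (Real.sqrt_pos.2 (penrose14_fpos m r₀ hr₀ hroot (lt_of_le_of_lt ha ht.1)))
  linarith

private theorem penrose14_sm_mono' (m r₀ : ℝ) (hr₀ : 0 < r₀) (hroot : r₀ ^ 3 + r₀ = 2 * m) {a b : ℝ}
    (ha : r₀ ≤ a) (hab : a ≤ b) : sm m r₀ a ≤ sm m r₀ b := by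
  rcases eq_or_lt_of_le hab with h | h
  · rw [h]
  · exact (penrose14_sm_mono m r₀ hr₀ hroot ha h).le

/-- For every `m > 0`, the mean curvature along the arclength coordinate,
`h(s) := H_m(r_m(s))`, satisfies: `h` is differentiable on `(0,∞)` with
`h′(s) = 6m/r_m(s)³ − 2/r_m(s)² = (2/r_m(s)³)(3m − r_m(s))`; the one-sided derivative of
`h` at `s = 0` exists and equals `3 + 1/r₀(m)²`, which is strictly positive; and
`h′(s) > 0` when `r_m(s) < 3m` while `h′(s) < 0` when `r_m(s) > 3m`.  Here `r₀` is the
unique positive real with `r₀³ + r₀ = 2m` and `r_m` is the inverse of `s_m`, as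
expressed by the hypotheses `hinv₁`, `hinv₂`. -/
theorem penrose_stmt14 (m r₀ : ℝ) (hm : 0 < m) (hr₀ : 0 < r₀)
    (hroot : r₀ ^ 3 + r₀ = 2 * m) (rm : ℝ → ℝ)
    (hinv₁ : ∀ r : ℝ, r₀ ≤ r → rm (sm m r₀ r) = r)
    (hinv₂ : ∀ s : ℝ, 0 ≤ s → r₀ ≤ rm s ∧ sm m r₀ (rm s) = s) :
    (∀ s : ℝ, 0 < s →
      HasDerivAt (fun s => Hm m (rm s)) (6 * m / (rm s) ^ 3 - 2 / (rm s) ^ 2) s ∧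
      6 * m / (rm s) ^ 3 - 2 / (rm s) ^ 2 = (2 / (rm s) ^ 3) * (3 * m - rm s)) ∧
    (HasDerivWithinAt (fun s => Hm m (rm s)) (3 + 1 / r₀ ^ 2) (Set.Ici 0) 0 ∧
      0 < 3 + 1 / r₀ ^ 2) ∧
    ∀ s : ℝ, 0 < s →
      (rm s < 3 * m → 0 < 6 * m / (rm s) ^ 3 - 2 / (rm s) ^ 2) ∧
      (3 * m < rm s → 6 * m / (rm s) ^ 3 - 2 / (rm s) ^ 2 < 0) := by
  -- rm 0 = r₀
  have rm0 : rm 0 = r₀ := by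
    rcases eq_or_lt_of_le (hinv₂ 0 le_rfl).1 with h | h
    · exact h.symm
    · have := penrose14_sm_mono m r₀ hr₀ hroot le_rfl h
      rw [penrose14_sm_zero, (hinv₂ 0 le_rfl).2] at this
      linarith
  -- for s > 0, r₀ < rm s
  have rmgt : ∀ s : ℝ, 0 < s → r₀ < rm s := by
    intro s hs
    rcases eq_or_lt_of_le (hinv₂ s hs.le).1 with h | h
    · exfalso; have := (hinv₂ s hs.le).2; rw [← h, penrose14_sm_zero] at this; linarith
    · exact h
  -- ε-δ continuity of rm
  have key : ∀ s : ℝ, 0 ≤ s → ∀ ε > (0:ℝ), ∃ δ > (0:ℝ),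
      ∀ y, 0 ≤ y → |y - s| < δ → |rm y - rm s| < ε := by
    intro s hs ε hε
    have hRr₀ : r₀ ≤ rm s := (hinv₂ s hs).1
    have hsmR : sm m r₀ (rm s) = s := (hinv₂ s hs).2
    have hup : s < sm m r₀ (rm s + ε) := by
      have := penrose14_sm_mono m r₀ hr₀ hroot hRr₀ (show rm s < rm s + ε by linarith)
      rwa [hsmR] at this
    have hub : ∀ y, 0 ≤ y → y < sm m r₀ (rm s + ε) → rm y < rm s + ε := by
      intro y hy h
      by_contra hcon; push_neg at hcon
      have := penrose14_sm_mono' m r₀ hr₀ hroot (by linarith : r₀ ≤ rm s + ε) hcon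
      rw [(hinv₂ y hy).2] at this; linarith
    by_cases hcase : r₀ ≤ rm s - ε
    · have hlo : sm m r₀ (rm s - ε) < s := by
        have := penrose14_sm_mono m r₀ hr₀ hroot hcase (show rm s - ε < rm s by linarith)
        rwa [hsmR] at this
      refine ⟨min (sm m r₀ (rm s + ε) - s) (s - sm m r₀ (rm s - ε)),
        lt_min (by linarith) (by linarith), ?_⟩
      intro y hy hyd
      have hd := abs_lt.1 hyd
      have hy1 : y < sm m r₀ (rm s + ε) := by
        have := min_le_left (sm m r₀ (rm s + ε) - s) (s - sm m r₀ (rm s - ε)); linarith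
      have hy2 : sm m r₀ (rm s - ε) < y := by
        have := min_le_right (sm m r₀ (rm s + ε) - s) (s - sm m r₀ (rm s - ε)); linarith
      have u1 := hub y hy hy1
      have u2 : rm s - ε < rm y := by
        by_contra hcon; push_neg at hcon
        have := penrose14_sm_mono' m r₀ hr₀ hroot (hinv₂ y hy).1 hcon
        rw [(hinv₂ y hy).2] at this; linarith
      rw [abs_lt]; constructor <;> linarith
    · push_neg at hcase
      refine ⟨sm m r₀ (rm s + ε) - s, by linarith, ?_⟩
      intro y hy hyd
      have hd := abs_lt.1 hyd
      have u1 := hub y hy (by linarith)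
      have u2 : rm s - ε < rm y := lt_of_lt_of_le hcase (hinv₂ y hy).1
      rw [abs_lt]; constructor <;> linarith
  have rm_cw : ContinuousWithinAt rm (Set.Ici 0) 0 := by
    rw [Metric.continuousWithinAt_iff]
    intro ε hε
    obtain ⟨δ, hδ, hkey⟩ := key 0 le_rfl ε hε
    exact ⟨δ, hδ, fun {y} hy hyd => by
      simpa [Real.dist_eq] using hkey y hy (by simpa [Real.dist_eq] using hyd)⟩
  have rm_ca : ∀ s : ℝ, 0 < s → ContinuousAt rm s := by
    intro s hs
    rw [Metric.continuousAt_iff]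
    intro ε hε
    obtain ⟨δ, hδ, hkey⟩ := key s hs.le ε hε
    refine ⟨min δ s, lt_min hδ hs, fun {y} hyd => ?_⟩
    rw [Real.dist_eq] at hyd
    have h1 : |y - s| < δ := lt_of_lt_of_le hyd (min_le_left _ _)
    have h0 : 0 ≤ y := by
      have := abs_lt.1 (lt_of_lt_of_le hyd (min_le_right _ _)); linarith
    rw [Real.dist_eq]
    exact hkey y h0 h1
  -- derivative of rm
  have rm_deriv : ∀ s : ℝ, 0 < s →
      HasDerivAt rm (Real.sqrt (1 + (rm s) ^ 2 - 2 * m / rm s)) s := by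
    intro s hs
    have hr : r₀ < rm s := rmgt s hs
    have h1 := penrose14_sm_deriv m r₀ hr₀ hroot hr
    have hpos : 0 < Real.sqrt (1 + (rm s) ^ 2 - 2 * m / rm s) :=
      Real.sqrt_pos.2 (penrose14_fpos m r₀ hr₀ hroot hr)
    have hne : (Real.sqrt (1 + (rm s) ^ 2 - 2 * m / rm s))⁻¹ ≠ 0 :=
      inv_ne_zero (ne_of_gt hpos)
    have hfg : ∀ᶠ y in nhds s, sm m r₀ (rm y) = y := by
      filter_upwards [isOpen_Ioi.mem_nhds hs] with y (hy : (0:ℝ) < y)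
      exact (hinv₂ y hy.le).2
    have := HasDerivAt.of_local_left_inverse (rm_ca s hs) h1 hne hfg
    simpa [inv_inv] using this
  -- composite derivative
  have hD : ∀ s : ℝ, 0 < s →
      HasDerivAt (fun s => (2 / rm s) * Real.sqrt (1 + (rm s) ^ 2 - 2 * m / rm s))
        (6 * m / (rm s) ^ 3 - 2 / (rm s) ^ 2) s := by
    intro s hs
    have hr : r₀ < rm s := rmgt s hs
    have hr0 : (0:ℝ) < rm s := hr₀.trans hr
    have hrne : rm s ≠ 0 := ne_of_gt hr0
    have hfp : 0 < 1 + (rm s) ^ 2 - 2 * m / rm s := penrose14_fpos m r₀ hr₀ hroot hr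
    have hρpos : 0 < Real.sqrt (1 + (rm s) ^ 2 - 2 * m / rm s) := Real.sqrt_pos.2 hfp
    have hρsq : Real.sqrt (1 + (rm s) ^ 2 - 2 * m / rm s) ^ 2
        = 1 + (rm s) ^ 2 - 2 * m / rm s := Real.sq_sqrt hfp.le
    have h1 : HasDerivAt rm (Real.sqrt (1 + (rm s) ^ 2 - 2 * m / rm s)) s := rm_deriv s hs
    have hf : HasDerivAt (fun t : ℝ => 1 + t ^ 2 - 2 * m / t)
        (2 * rm s + 2 * m / (rm s) ^ 2) (rm s) := by
      have ha : HasDerivAt (fun t : ℝ => 1 + t ^ 2) (2 * rm s) (rm s) := by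
        simpa using (hasDerivAt_pow 2 (rm s)).const_add 1
      have hb : HasDerivAt (fun t : ℝ => 2 * m / t) (-(2 * m) / (rm s) ^ 2) (rm s) := by
        simpa [Pi.div_def] using (hasDerivAt_const (rm s) (2*m)).div (hasDerivAt_id (rm s)) hrne
      exact (ha.sub hb).congr_deriv (by ring)
    have h2 := hf.comp s h1
    have h3 := (Real.hasDerivAt_sqrt (ne_of_gt hfp)).comp s h2
    have h4 : HasDerivAt (fun s => 2 / rm s)
        ((0 * rm s - 2 * Real.sqrt (1 + (rm s) ^ 2 - 2 * m / rm s)) / (rm s) ^ 2) s :=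
      (hasDerivAt_const s (2:ℝ)).div h1 hrne
    have h5 := h4.mul h3
    have key : ∀ ρ : ℝ, 0 < ρ → ρ ^ 2 = 1 + (rm s) ^ 2 - 2 * m / rm s →
        (0 * rm s - 2 * ρ) / rm s ^ 2 * ρ +
          2 / rm s * (1 / (2 * ρ) * ((2 * rm s + 2 * m / rm s ^ 2) * ρ))
        = 6 * m / (rm s) ^ 3 - 2 / (rm s) ^ 2 := by
      intro ρ hρ hsq
      have hsq' : ρ ^ 2 * rm s = rm s + rm s ^ 3 - 2 * m := by
        rw [hsq]; field_simp
      field_simp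
      linear_combination (-2) * hsq'
    exact h5.congr_deriv (key _ hρpos hρsq)
  -- value of the limit derivative at r₀
  have hval : 6 * m / r₀ ^ 3 - 2 / r₀ ^ 2 = 3 + 1 / r₀ ^ 2 := by
    field_simp
    linear_combination (-3) * hroot
  -- boundary derivative
  have hbd : HasDerivWithinAt
      (fun s => (2 / rm s) * Real.sqrt (1 + (rm s) ^ 2 - 2 * m / rm s))
      (3 + 1 / r₀ ^ 2) (Set.Ici 0) 0 := by
    apply hasDerivWithinAt_Ici_of_tendsto_deriv (s := Set.Ioi 0)
    · intro s hs
      exact ((hD s hs).differentiableAt).differentiableWithinAt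
    · -- continuity within Ioi 0 at 0
      have hrm : ContinuousWithinAt rm (Set.Ioi 0) 0 := rm_cw.mono Set.Ioi_subset_Ici_self
      have hHm : ContinuousAt (fun r : ℝ => (2 / r) * Real.sqrt (1 + r ^ 2 - 2 * m / r)) r₀ := by
        apply ContinuousAt.mul
        · exact continuousAt_const.div continuousAt_id (ne_of_gt hr₀)
        · apply ContinuousAt.sqrt
          exact (continuousAt_const.add ((continuous_pow 2).continuousAt)).sub
            (continuousAt_const.div continuousAt_id (ne_of_gt hr₀))
      rw [← rm0] at hHm
      exact hHm.comp_continuousWithinAt hrm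
    · exact self_mem_nhdsWithin
    · -- limit of the derivative
      have hrm0 : Tendsto rm (nhdsWithin 0 (Set.Ioi 0)) (nhds r₀) := by
        have h := rm_cw.tendsto
        rw [rm0] at h
        exact h.mono_left (nhdsWithin_mono 0 Set.Ioi_subset_Ici_self)
      have hcψ : ContinuousAt (fun r : ℝ => 6 * m / r ^ 3 - 2 / r ^ 2) r₀ := by
        apply ContinuousAt.sub
        · exact continuousAt_const.div ((continuous_pow 3).continuousAt)
            (pow_ne_zero 3 (ne_of_gt hr₀))
        · exact continuousAt_const.div ((continuous_pow 2).continuousAt)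
            (pow_ne_zero 2 (ne_of_gt hr₀))
      have htψ : Tendsto (fun s => 6 * m / (rm s) ^ 3 - 2 / (rm s) ^ 2)
          (nhdsWithin 0 (Set.Ioi 0)) (nhds (3 + 1 / r₀ ^ 2)) := by
        rw [← hval]
        exact (hcψ.tendsto).comp hrm0
      apply htψ.congr'
      filter_upwards [self_mem_nhdsWithin] with s (hs : (0:ℝ) < s)
      exact ((hD s hs).deriv).symm
  refine ⟨?_, ⟨?_, by positivity⟩, ?_⟩
  · intro s hs
    have hr0 : (0:ℝ) < rm s := hr₀.trans (rmgt s hs)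
    refine ⟨?_, by field_simp; ring⟩
    simpa [Hm] using hD s hs
  · simpa [Hm] using hbd
  · intro s hs
    have hr0 : (0:ℝ) < rm s := hr₀.trans (rmgt s hs)
    have hid : 6 * m / (rm s) ^ 3 - 2 / (rm s) ^ 2 = (2 / (rm s) ^ 3) * (3 * m - rm s) := by
      field_simp; ring
    constructor
    · intro h
      rw [hid]
      exact mul_pos (by positivity) (by linarith)
    · intro h
      rw [hid]
      exact mul_neg_of_pos_of_neg (by positivity) (by linarith)
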